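/- Let s>0 and n∈ℕ, n≥1. Then Σ_{k=1}^n (1/k)·Γ(n+1)Γ(n-k+2s)/(Γ(n-k+1)Γ(n+2s)) = ψ(n+2s) − ψ(2s), where ψ = Γ'/Γ is the digamma function. -/

import Mathlib

noncomputable section

namespace HeatModel

/-- The digamma function `ψ = Γ'/Γ`. -/
def digamma (x : ℝ) : ℝ := deriv Real.Gamma x / Real.Gamma x

lemma gamma_ne_zero_of_pos {x : ℝ} (hx : 0 < x) : Real.Gamma x ≠ 0 :=
  (Real.Gamma_pos_of_pos hx).ne'

lemma digamma_add_one {x : ℝ} (hx : 0 < x) :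
    digamma (x + 1) = digamma x + 1 / x := by
  have hΓ : Real.Gamma x ≠ 0 := gamma_ne_zero_of_pos hx
  have hdiff : DifferentiableAt ℝ Real.Gamma x := by
    apply Real.differentiableAt_Gamma
    intro m h
    have : (0:ℝ) ≤ m := Nat.cast_nonneg m
    rw [h] at hx; linarith
  have hev : (fun y => Real.Gamma (y + 1)) =ᶠ[nhds x] (fun y => y * Real.Gamma y) := by
    filter_upwards [eventually_gt_nhds hx] with y hy
    exact Real.Gamma_add_one hy.ne'
  have hder : deriv Real.Gamma (x + 1) = Real.Gamma x + x * deriv Real.Gamma x := by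
    rw [← deriv_comp_add_const Real.Gamma 1 x, hev.deriv_eq,
      deriv_fun_mul differentiableAt_fun_id hdiff]
    simp [mul_comm]
  unfold digamma
  rw [hder, Real.Gamma_add_one hx.ne']
  field_simp
  ring

lemma digamma_sum (c : ℝ) (hc : 0 < c) (n : ℕ) :
    digamma ((n : ℝ) + c) - digamma c = ∑ m ∈ Finset.range n, 1 / (c + m) := by
  induction n with
  | zero => simp
  | succ n ih =>
    have h1 : ((n + 1 : ℕ) : ℝ) + c = ((n : ℝ) + c) + 1 := by push_cast; ring
    have h2 : digamma (((n : ℝ) + c) + 1) = digamma ((n : ℝ) + c) + 1 / ((n : ℝ) + c) :=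
      digamma_add_one (by positivity)
    rw [h1, h2, Finset.sum_range_succ, ← ih]
    have : c + (n : ℝ) = (n : ℝ) + c := by ring
    rw [this]; ring

lemma tele (c : ℝ) (hc : 0 < c) (n : ℕ) :
    ∑ m ∈ Finset.range n, (c - 1) * Real.Gamma ((m : ℝ) + c) / Real.Gamma ((m : ℝ) + 2)
      = Real.Gamma ((n : ℝ) + c) / Real.Gamma ((n : ℝ) + 1) - Real.Gamma c := by
  have h := Finset.sum_range_sub
    (fun m : ℕ => Real.Gamma ((m : ℝ) + c) / Real.Gamma ((m : ℝ) + 1)) n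
  have hpt : ∀ m : ℕ,
      Real.Gamma (((m + 1 : ℕ) : ℝ) + c) / Real.Gamma (((m + 1 : ℕ) : ℝ) + 1)
        - Real.Gamma ((m : ℝ) + c) / Real.Gamma ((m : ℝ) + 1)
      = (c - 1) * Real.Gamma ((m : ℝ) + c) / Real.Gamma ((m : ℝ) + 2) := by
    intro m
    have e1 : Real.Gamma (((m + 1 : ℕ) : ℝ) + c) = ((m : ℝ) + c) * Real.Gamma ((m : ℝ) + c) := by
      push_cast
      rw [show (m : ℝ) + 1 + c = ((m : ℝ) + c) + 1 by ring]
      exact Real.Gamma_add_one (by positivity)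
    have e2 : Real.Gamma (((m + 1 : ℕ) : ℝ) + 1) = ((m : ℝ) + 1) * Real.Gamma ((m : ℝ) + 1) := by
      push_cast
      exact Real.Gamma_add_one (by positivity)
    have e3 : Real.Gamma ((m : ℝ) + 2) = ((m : ℝ) + 1) * Real.Gamma ((m : ℝ) + 1) := by
      rw [show (m : ℝ) + 2 = ((m : ℝ) + 1) + 1 by ring]
      exact Real.Gamma_add_one (by positivity)
    have hne : Real.Gamma ((m : ℝ) + 1) ≠ 0 := gamma_ne_zero_of_pos (by positivity)
    have hm1 : (m : ℝ) + 1 ≠ 0 := by positivity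
    rw [e1, e2, e3]
    field_simp
    ring
  calc ∑ m ∈ Finset.range n, (c - 1) * Real.Gamma ((m : ℝ) + c) / Real.Gamma ((m : ℝ) + 2)
      = ∑ m ∈ Finset.range n,
          (Real.Gamma (((m + 1 : ℕ) : ℝ) + c) / Real.Gamma (((m + 1 : ℕ) : ℝ) + 1)
            - Real.Gamma ((m : ℝ) + c) / Real.Gamma ((m : ℝ) + 1)) :=
        Finset.sum_congr rfl (fun m _ => (hpt m).symm)
    _ = Real.Gamma ((n : ℝ) + c) / Real.Gamma ((n : ℝ) + 1) - Real.Gamma c := by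
        rw [h]; norm_num [Real.Gamma_one]

lemma sum_Icc_reindex (n : ℕ) (g : ℕ → ℝ) :
    ∑ k ∈ Finset.Icc 1 n, g (n - k) = ∑ m ∈ Finset.range n, g m := by
  rw [← Finset.sum_range_reflect]
  apply Finset.sum_nbij' (fun k => k - 1) (fun j => j + 1)
  · intro k hk
    simp only [Finset.mem_Icc] at hk
    simp only [Finset.mem_range]
    omega
  · intro j hj
    simp only [Finset.mem_range] at hj
    simp only [Finset.mem_Icc]
    omega
  · intro k hk
    simp only [Finset.mem_Icc] at hk
    omega
  · intro j hj; omega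
  · intro k hk
    simp only [Finset.mem_Icc] at hk
    congr 1
    omega

lemma key (c : ℝ) (hc : 0 < c) (n : ℕ) :
    (∑ k ∈ Finset.Icc 1 n,
        (1 / (k : ℝ)) * (Real.Gamma ((n : ℝ) + 1) * Real.Gamma ((n : ℝ) - (k : ℝ) + c)) /
          (Real.Gamma ((n : ℝ) - (k : ℝ) + 1) * Real.Gamma ((n : ℝ) + c)))
    = ∑ m ∈ Finset.range n, 1 / (c + m) := by
  induction n with
  | zero => simp
  | succ n ih =>
    have hΓn1 : Real.Gamma ((n : ℝ) + 1) ≠ 0 := gamma_ne_zero_of_pos (by positivity)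
    have hΓnc : Real.Gamma ((n : ℝ) + c) ≠ 0 := gamma_ne_zero_of_pos (by positivity)
    have hΓc : Real.Gamma c ≠ 0 := gamma_ne_zero_of_pos hc
    have hnc : (n : ℝ) + c ≠ 0 := by positivity
    rw [Finset.sum_Icc_succ_top (by omega : 1 ≤ n + 1), Finset.sum_range_succ, ← ih]
    -- the top term k = n+1
    have htop :
        (1 / ((n + 1 : ℕ) : ℝ)) * (Real.Gamma (((n + 1 : ℕ) : ℝ) + 1) *
            Real.Gamma (((n + 1 : ℕ) : ℝ) - ((n + 1 : ℕ) : ℝ) + c)) /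
          (Real.Gamma (((n + 1 : ℕ) : ℝ) - ((n + 1 : ℕ) : ℝ) + 1) *
            Real.Gamma (((n + 1 : ℕ) : ℝ) + c))
        = Real.Gamma ((n : ℝ) + 1) * Real.Gamma c / (((n : ℝ) + c) * Real.Gamma ((n : ℝ) + c)) := by
      push_cast
      have e1 : Real.Gamma ((n : ℝ) + 1 + 1) = ((n : ℝ) + 1) * Real.Gamma ((n : ℝ) + 1) :=
        Real.Gamma_add_one (by positivity)
      have e2 : Real.Gamma ((n : ℝ) + 1 + c) = ((n : ℝ) + c) * Real.Gamma ((n : ℝ) + c) := by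
        rw [show (n : ℝ) + 1 + c = ((n : ℝ) + c) + 1 by ring]
        exact Real.Gamma_add_one (by positivity)
      rw [show (n : ℝ) + 1 - ((n : ℝ) + 1) + c = c by ring,
        show (n : ℝ) + 1 - ((n : ℝ) + 1) + 1 = 1 by ring, e1, e2, Real.Gamma_one]
      have hn1 : (n : ℝ) + 1 ≠ 0 := by positivity
      field_simp
    -- splitting each term with k ≤ n
    have hsplit : ∀ k ∈ Finset.Icc 1 n,
        (1 / (k : ℝ)) * (Real.Gamma (((n + 1 : ℕ) : ℝ) + 1) *
            Real.Gamma (((n + 1 : ℕ) : ℝ) - (k : ℝ) + c)) /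
          (Real.Gamma (((n + 1 : ℕ) : ℝ) - (k : ℝ) + 1) * Real.Gamma (((n + 1 : ℕ) : ℝ) + c))
        = (1 / (k : ℝ)) * (Real.Gamma ((n : ℝ) + 1) * Real.Gamma ((n : ℝ) - (k : ℝ) + c)) /
            (Real.Gamma ((n : ℝ) - (k : ℝ) + 1) * Real.Gamma ((n : ℝ) + c))
          + (Real.Gamma ((n : ℝ) + 1) / (Real.Gamma ((n : ℝ) + c) * ((n : ℝ) + c))) *
              ((c - 1) * Real.Gamma ((n : ℝ) - (k : ℝ) + c) /
                Real.Gamma ((n : ℝ) - (k : ℝ) + 2)) := by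
      intro k hk
      simp only [Finset.mem_Icc] at hk
      have hk1 : (1 : ℝ) ≤ (k : ℝ) := by exact_mod_cast hk.1
      have hkn : (k : ℝ) ≤ (n : ℝ) := by exact_mod_cast hk.2
      have hnk : (0 : ℝ) ≤ (n : ℝ) - (k : ℝ) := by linarith
      have hkne : (k : ℝ) ≠ 0 := by linarith
      have hnkc : (0 : ℝ) < (n : ℝ) - (k : ℝ) + c := by linarith
      have hnk1 : (0 : ℝ) < (n : ℝ) - (k : ℝ) + 1 := by linarith
      push_cast
      have e1 : Real.Gamma ((n : ℝ) + 1 + 1) = ((n : ℝ) + 1) * Real.Gamma ((n : ℝ) + 1) :=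
        Real.Gamma_add_one (by positivity)
      have e2 : Real.Gamma ((n : ℝ) + 1 - (k : ℝ) + c)
          = ((n : ℝ) - (k : ℝ) + c) * Real.Gamma ((n : ℝ) - (k : ℝ) + c) := by
        rw [show (n : ℝ) + 1 - (k : ℝ) + c = ((n : ℝ) - (k : ℝ) + c) + 1 by ring]
        exact Real.Gamma_add_one hnkc.ne'
      have e3 : Real.Gamma ((n : ℝ) + 1 - (k : ℝ) + 1)
          = ((n : ℝ) - (k : ℝ) + 1) * Real.Gamma ((n : ℝ) - (k : ℝ) + 1) := by
        rw [show (n : ℝ) + 1 - (k : ℝ) + 1 = ((n : ℝ) - (k : ℝ) + 1) + 1 by ring]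
        exact Real.Gamma_add_one hnk1.ne'
      have e4 : Real.Gamma ((n : ℝ) + 1 + c) = ((n : ℝ) + c) * Real.Gamma ((n : ℝ) + c) := by
        rw [show (n : ℝ) + 1 + c = ((n : ℝ) + c) + 1 by ring]
        exact Real.Gamma_add_one (by positivity)
      have e5 : Real.Gamma ((n : ℝ) - (k : ℝ) + 2)
          = ((n : ℝ) - (k : ℝ) + 1) * Real.Gamma ((n : ℝ) - (k : ℝ) + 1) := by
        rw [show (n : ℝ) - (k : ℝ) + 2 = ((n : ℝ) - (k : ℝ) + 1) + 1 by ring]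
        exact Real.Gamma_add_one hnk1.ne'
      have hΓa : Real.Gamma ((n : ℝ) - (k : ℝ) + c) ≠ 0 := gamma_ne_zero_of_pos hnkc
      have hΓb : Real.Gamma ((n : ℝ) - (k : ℝ) + 1) ≠ 0 := gamma_ne_zero_of_pos hnk1
      rw [e1, e2, e3, e4, e5]
      field_simp
      ring
    rw [Finset.sum_congr rfl hsplit, Finset.sum_add_distrib, htop, ← Finset.mul_sum]
    -- now evaluate the correction sum via telescoping
    have hre : (∑ k ∈ Finset.Icc 1 n,
        (c - 1) * Real.Gamma ((n : ℝ) - (k : ℝ) + c) / Real.Gamma ((n : ℝ) - (k : ℝ) + 2))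
        = Real.Gamma ((n : ℝ) + c) / Real.Gamma ((n : ℝ) + 1) - Real.Gamma c := by
      have hcongr : ∀ k ∈ Finset.Icc 1 n,
          (c - 1) * Real.Gamma ((n : ℝ) - (k : ℝ) + c) / Real.Gamma ((n : ℝ) - (k : ℝ) + 2)
          = (fun m : ℕ => (c - 1) * Real.Gamma ((m : ℝ) + c) / Real.Gamma ((m : ℝ) + 2)) (n - k) := by
        intro k hk
        simp only [Finset.mem_Icc] at hk
        have : ((n - k : ℕ) : ℝ) = (n : ℝ) - (k : ℝ) := by
          have := hk.2; push_cast [Nat.cast_sub this]; ring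
        simp only [this]
      rw [Finset.sum_congr rfl hcongr,
        sum_Icc_reindex n (fun m : ℕ => (c - 1) * Real.Gamma ((m : ℝ) + c) / Real.Gamma ((m : ℝ) + 2)),
        tele c hc n]
    rw [hre]
    have : c + (n : ℝ) ≠ 0 := by positivity
    generalize (∑ k ∈ Finset.Icc 1 n,
        (1 / (k : ℝ)) * (Real.Gamma ((n : ℝ) + 1) * Real.Gamma ((n : ℝ) - (k : ℝ) + c)) /
          (Real.Gamma ((n : ℝ) - (k : ℝ) + 1) * Real.Gamma ((n : ℝ) + c))) = S
    field_simp
    ring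

theorem sum_phi_eq_digamma (s : ℝ) (hs : 0 < s) (n : ℕ) (hn : 1 ≤ n) :
    (∑ k ∈ Finset.Icc 1 n,
        (1 / (k : ℝ)) * (Real.Gamma ((n : ℝ) + 1) * Real.Gamma ((n : ℝ) - (k : ℝ) + 2 * s)) /
          (Real.Gamma ((n : ℝ) - (k : ℝ) + 1) * Real.Gamma ((n : ℝ) + 2 * s)))
    = digamma ((n : ℝ) + 2 * s) - digamma (2 * s) := by
  rw [key (2 * s) (by positivity) n, digamma_sum (2 * s) (by positivity) n]

end HeatModel
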